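/- Let p be a prime, n ≥ 1, c ∈ ℝⁿ, ρ > 0, let B = B_{c,n}(ρ), let x ∈ B ∩ ℤⁿ, and let μ ∈ ℤ. Then the number of points z ∈ B ∩ ℤⁿ with z ≡ μx (mod p) (coordinatewise congruence) is at most 1 + (4ρ²/p²)·(8nρ²/p²)^{4ρ²/p²}. -/

import Mathlib

open Finset

private def encV {n : ℕ} (w : Fin n → ℤ) (i : Fin n) : ℤ :=
  if 0 ≤ w i then ((i : ℕ) : ℤ) + 1 else -(((i : ℕ) : ℤ) + 1)

private def encL {n : ℕ} (w : Fin n → ℤ) : List ℤ :=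
  (List.ofFn fun i : Fin n => List.replicate (w i).natAbs (encV w i)).flatten

private lemma encL_length {n : ℕ} (w : Fin n → ℤ) :
    (encL w).length = ∑ i, (w i).natAbs := by
  simp [encL, List.length_flatten, List.map_ofFn, List.sum_ofFn, Function.comp]

private lemma encL_count {n : ℕ} (w : Fin n → ℤ) (a : ℤ) :
    (encL w).count a = ∑ i, if encV w i = a then (w i).natAbs else 0 := by
  rw [encL, List.count_flatten, List.map_ofFn, List.sum_ofFn]
  apply Finset.sum_congr rfl
  intro i _
  simp only [Function.comp, List.count_replicate, beq_iff_eq]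

private lemma encL_decode {n : ℕ} (w : Fin n → ℤ) (i : Fin n) :
    ((encL w).count (((i:ℕ):ℤ)+1) : ℤ) - (encL w).count (-(((i:ℕ):ℤ)+1)) = w i := by
  have h1 : (encL w).count (((i:ℕ):ℤ)+1) = if 0 ≤ w i then (w i).natAbs else 0 := by
    rw [encL_count, Finset.sum_eq_single i]
    · unfold encV
      split <;> simp_all
      · omega
    · intro b _ hb
      unfold encV
      have : (b:ℕ) ≠ (i:ℕ) := fun h => hb (Fin.ext h)
      split <;> split <;> (try rfl) <;> omega
    · simp
  have h2 : (encL w).count (-(((i:ℕ):ℤ)+1)) = if 0 ≤ w i then 0 else (w i).natAbs := by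
    rw [encL_count, Finset.sum_eq_single i]
    · unfold encV
      split <;> simp_all
      · omega
    · intro b _ hb
      unfold encV
      have : (b:ℕ) ≠ (i:ℕ) := fun h => hb (Fin.ext h)
      split <;> split <;> (try rfl) <;> omega
    · simp
  rw [h1, h2]
  split <;> omega

private lemma encL_inj {n : ℕ} {w w' : Fin n → ℤ} (h : encL w = encL w') : w = w' := by
  funext i
  rw [← encL_decode w i, ← encL_decode w' i, h]

private lemma encL_mem {n : ℕ} {w : Fin n → ℤ} {a : ℤ} (ha : a ∈ encL w) :
    a ≠ 0 ∧ -(n:ℤ) ≤ a ∧ a ≤ n := by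
  rw [encL, List.mem_flatten] at ha
  obtain ⟨l, hl, hal⟩ := ha
  rw [List.mem_ofFn] at hl
  obtain ⟨i, rfl⟩ := hl
  have := List.eq_of_mem_replicate hal
  subst this
  have : (i:ℕ) < n := i.isLt
  unfold encV
  split <;> constructor <;> omega

private lemma list_eq_of_getD {K : ℕ} {l l' : List ℤ}
    (h0 : ∀ a ∈ l, a ≠ 0) (h0' : ∀ a ∈ l', a ≠ 0)
    (hl : l.length ≤ K) (hl' : l'.length ≤ K)
    (h : ∀ j : Fin K, l.getD j 0 = l'.getD j 0) : l = l' := by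
  have key : ∀ (a b : List ℤ), (∀ x ∈ b, x ≠ 0) → b.length ≤ K →
      (∀ j : Fin K, a.getD j 0 = b.getD j 0) → ¬ a.length < b.length := by
    intro a b hb hbK hab hlt
    have hj : a.length < K := lt_of_lt_of_le hlt hbK
    have h2 := hab ⟨a.length, hj⟩
    rw [List.getD_eq_default _ _ (le_refl _), List.getD_eq_getElem _ _ hlt] at h2
    exact hb _ (List.getElem_mem hlt) h2.symm
  have hlen : l.length = l'.length := by
    rcases lt_trichotomy l.length l'.length with h1 | h1 | h1
    · exact absurd h1 (key l l' h0' hl' h)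
    · exact h1
    · exact absurd h1 (key l' l h0 hl (fun j => (h j).symm))
  apply List.ext_getElem hlen
  intro j hj1 hj2
  have := h ⟨j, lt_of_lt_of_le hj1 hl⟩
  rwa [List.getD_eq_getElem _ _ hj1, List.getD_eq_getElem _ _ hj2] at this

private lemma W_card (n K : ℕ) :
    Set.ncard {w : Fin n → ℤ | ∑ i, (w i).natAbs ≤ K} ≤ (2*n+1)^K := by
  set W := {w : Fin n → ℤ | ∑ i, (w i).natAbs ≤ K} with hW
  set T : Finset (Fin K → ℤ) := Fintype.piFinset (fun _ => Finset.Icc (-(n:ℤ)) (n:ℤ)) with hT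
  set e : (Fin n → ℤ) → (Fin K → ℤ) := fun w j => (encL w).getD j 0 with he
  have hmapsto : ∀ w ∈ W, e w ∈ (T : Set (Fin K → ℤ)) := by
    intro w hw
    simp only [Finset.mem_coe, hT, Fintype.mem_piFinset]
    intro j
    rw [Finset.mem_Icc]
    by_cases hj : (j:ℕ) < (encL w).length
    · have hmem : (encL w).getD j 0 ∈ encL w := by
        rw [List.getD_eq_getElem _ _ hj]; exact List.getElem_mem hj
      have := encL_mem hmem
      exact ⟨this.2.1, this.2.2⟩
    · show -(n:ℤ) ≤ (encL w).getD j 0 ∧ (encL w).getD j 0 ≤ n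
      rw [List.getD_eq_default _ _ (le_of_not_gt hj)]
      constructor <;> omega
  have hinj : Set.InjOn e W := by
    intro w hw w' hw' hww
    apply encL_inj
    apply list_eq_of_getD (fun a ha => (encL_mem ha).1) (fun a ha => (encL_mem ha).1)
      ((encL_length w).le.trans hw) ((encL_length w').le.trans hw')
    intro j; exact congrFun hww j
  calc W.ncard = (e '' W).ncard := (Set.ncard_image_of_injOn hinj).symm
    _ ≤ (T : Set (Fin K → ℤ)).ncard := by
        apply Set.ncard_le_ncard _ T.finite_toSet
        rintro y ⟨w, hw, rfl⟩; exact hmapsto w hw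
    _ = T.card := Set.ncard_coe_finset T
    _ ≤ (2*n+1)^K := by
        rw [hT, Fintype.card_piFinset]
        simp only [Int.card_Icc, Finset.prod_const, Finset.card_univ, Fintype.card_fin]
        have : ((n:ℤ) + 1 - -(n:ℤ)).toNat = 2*n+1 := by omega
        rw [this]

private lemma W_finite (n K : ℕ) :
    Set.Finite {w : Fin n → ℤ | ∑ i, (w i).natAbs ≤ K} := by
  apply Set.Finite.subset (Set.Finite.pi (fun i : Fin n => Set.finite_Icc (-(K:ℤ)) K))
  intro w hw
  simp only [Set.mem_pi, Set.mem_univ, Set.mem_Icc, forall_true_left]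
  intro i
  have h1 := Finset.single_le_sum (f := fun i => (w i).natAbs)
    (fun i _ => Nat.zero_le _) (Finset.mem_univ i)
  have h2 : (w i).natAbs ≤ K := le_trans h1 hw
  constructor <;> omega

private lemma nat_bound {n K : ℕ} (hn : 1 ≤ n) (hK : 1 ≤ K) :
    (2*n+1)^K ≤ 1 + K * (2*n*K)^K := by
  rcases eq_or_lt_of_le hK with h1 | h2
  · rw [← h1]; simp
  · have hb : 2*n+1 ≤ 2*n*K := by nlinarith
    calc (2*n+1)^K ≤ (2*n*K)^K := Nat.pow_le_pow_left hb K
      _ ≤ K * (2*n*K)^K := Nat.le_mul_of_pos_left _ (by omega)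
      _ ≤ 1 + K * (2*n*K)^K := by omega

private lemma real_bound {n : ℕ} (hn : 1 ≤ n) {t : ℝ} (ht : 0 < t) :
    (((2*n+1)^(⌊t⌋₊) : ℕ) : ℝ) ≤ 1 + t * (2*n*t) ^ (t : ℝ) := by
  set K := ⌊t⌋₊ with hKdef
  have hKt : (K:ℝ) ≤ t := Nat.floor_le ht.le
  have hn' : (1:ℝ) ≤ (n:ℝ) := by exact_mod_cast hn
  rcases Nat.eq_zero_or_pos K with h0 | h1
  · rw [h0]
    have : (0:ℝ) ≤ t * (2*n*t) ^ (t:ℝ) := by positivity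
    simp only [pow_zero, Nat.cast_one]
    linarith
  · have h1t : (1:ℝ) ≤ t := le_trans (by exact_mod_cast h1) hKt
    have hc : (((2*n+1)^K :ℕ):ℝ) ≤ 1 + (K:ℝ) * ((2*(n:ℝ)*K))^(K:ℕ) := by
      exact_mod_cast nat_bound hn h1
    refine le_trans hc ?_
    have e1 : ((2*(n:ℝ)*K))^(K:ℕ) = (2*(n:ℝ)*K) ^ ((K:ℕ):ℝ) := (Real.rpow_natCast _ _).symm
    have h2 : (2*(n:ℝ)*K) ^ ((K:ℕ):ℝ) ≤ (2*(n:ℝ)*t) ^ ((K:ℕ):ℝ) := by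
      apply Real.rpow_le_rpow (by positivity) (by nlinarith) (by positivity)
    have h3 : (2*(n:ℝ)*t) ^ ((K:ℕ):ℝ) ≤ (2*(n:ℝ)*t) ^ (t:ℝ) := by
      apply Real.rpow_le_rpow_of_exponent_le _ hKt
      nlinarith
    have h4 : (K:ℝ) * ((2*(n:ℝ)*K))^(K:ℕ) ≤ t * (2*(n:ℝ)*t)^(t:ℝ) := by
      rw [e1]
      apply mul_le_mul hKt (le_trans h2 h3) (by positivity) ht.le
    linarith
theorem equivalent_points_in_ball (p n : ℕ) (hp : p.Prime) (hn : 1 ≤ n)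
    (c : Fin n → ℝ) (ρ : ℝ) (hρ : 0 < ρ)
    (x : Fin n → ℤ) (hx : Real.sqrt (∑ i, ((x i : ℝ) - c i) ^ 2) ≤ ρ) (μ : ℤ) :
    (Set.ncard {z : Fin n → ℤ | Real.sqrt (∑ i, ((z i : ℝ) - c i) ^ 2) ≤ ρ ∧
        ∀ i, (p : ℤ) ∣ (z i - μ * x i)} : ℝ)
      ≤ 1 + (4 * ρ ^ 2 / (p : ℝ) ^ 2) *
          (8 * n * ρ ^ 2 / (p : ℝ) ^ 2) ^ ((4 * ρ ^ 2 / (p : ℝ) ^ 2) : ℝ) := by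
  have hp0 : (0:ℝ) < (p:ℝ) := by exact_mod_cast hp.pos
  have hn' : (1:ℝ) ≤ (n:ℝ) := by exact_mod_cast hn
  set t : ℝ := 4 * ρ ^ 2 / (p : ℝ) ^ 2 with htdef
  have ht : 0 < t := by rw [htdef]; positivity
  have hbase : 8 * (n:ℝ) * ρ ^ 2 / (p : ℝ) ^ 2 = 2 * (n:ℝ) * t := by rw [htdef]; ring
  rcases Set.eq_empty_or_nonempty {z : Fin n → ℤ | Real.sqrt (∑ i, ((z i : ℝ) - c i) ^ 2) ≤ ρ ∧
      ∀ i, (p : ℤ) ∣ (z i - μ * x i)} with hE | ⟨z0, hz0⟩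
  · rw [hE]
    simp only [Set.ncard_empty, Nat.cast_zero]
    have h1 : (0:ℝ) ≤ t * (8 * (n:ℝ) * ρ ^ 2 / (p : ℝ) ^ 2) ^ (t:ℝ) := by
      apply mul_nonneg ht.le
      apply Real.rpow_nonneg
      positivity
    linarith
  · set K := ⌊t⌋₊ with hKdef
    set φ : (Fin n → ℤ) → (Fin n → ℤ) := fun z i => (z i - z0 i) / (p:ℤ) with hφ
    have hzi : ∀ (z : Fin n → ℤ), (∀ i, (p:ℤ) ∣ (z i - μ * x i)) →
        ∀ i, z i = z0 i + p * φ z i := by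
      intro z hz i
      have hd : (p:ℤ) ∣ z i - z0 i := by
        have h := dvd_sub (hz i) (hz0.2 i)
        have e : (z i - μ * x i) - (z0 i - μ * x i) = z i - z0 i := by ring
        rwa [e] at h
      have h2 := Int.mul_ediv_cancel' hd
      rw [hφ]
      linarith [h2]
    have hinj : Set.InjOn φ {z : Fin n → ℤ | Real.sqrt (∑ i, ((z i : ℝ) - c i) ^ 2) ≤ ρ ∧
        ∀ i, (p : ℤ) ∣ (z i - μ * x i)} := by
      intro z hz z' hz' hzz
      funext i
      have e1 := hzi z hz.2 i
      have e2 := hzi z' hz'.2 i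
      rw [e1, e2, hzz]
    have hmem : ∀ (z : Fin n → ℤ), Real.sqrt (∑ i, ((z i : ℝ) - c i) ^ 2) ≤ ρ →
        (∀ i, (p:ℤ) ∣ (z i - μ * x i)) → ∑ i, ((φ z) i).natAbs ≤ K := by
      intro z hzb hzd
      set u : EuclideanSpace ℝ (Fin n) := WithLp.toLp 2 (fun i => ((z i : ℝ) - c i)) with hu
      set v : EuclideanSpace ℝ (Fin n) := WithLp.toLp 2 (fun i => ((z0 i : ℝ) - c i)) with hv
      have hnu : ‖u‖ = Real.sqrt (∑ i, ((z i:ℝ) - c i)^2) := by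
        rw [EuclideanSpace.norm_eq]
        congr 1
        apply Finset.sum_congr rfl
        intro i _
        rw [hu]
        simp [Real.norm_eq_abs, sq_abs]
      have hnv : ‖v‖ = Real.sqrt (∑ i, ((z0 i:ℝ) - c i)^2) := by
        rw [EuclideanSpace.norm_eq]
        congr 1
        apply Finset.sum_congr rfl
        intro i _
        rw [hv]
        simp [Real.norm_eq_abs, sq_abs]
      have tri : Real.sqrt (∑ i, ((z i:ℝ) - (z0 i:ℝ))^2) ≤ 2*ρ := by
        have h1 : ‖u - v‖ ≤ 2*ρ := by
          calc ‖u - v‖ ≤ ‖u‖ + ‖v‖ := norm_sub_le u v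
            _ ≤ ρ + ρ := by
                apply add_le_add
                · rw [hnu]; exact hzb
                · rw [hnv]; exact hz0.1
            _ = 2*ρ := by ring
        have h2 : ‖u - v‖ = Real.sqrt (∑ i, ((z i:ℝ) - (z0 i:ℝ))^2) := by
          rw [EuclideanSpace.norm_eq]
          congr 1
          apply Finset.sum_congr rfl
          intro i _
          have e3 : (u - v) i = ((z i:ℝ) - (z0 i:ℝ)) := by
            rw [PiLp.sub_apply, hu, hv]
            show ((z i:ℝ) - c i) - ((z0 i:ℝ) - c i) = _
            ring
          rw [e3, Real.norm_eq_abs, sq_abs]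
        rw [← h2]; exact h1
      have hsum2 : ∑ i, ((z i:ℝ) - (z0 i:ℝ))^2 ≤ 4*ρ^2 := by
        have hnn : (0:ℝ) ≤ ∑ i, ((z i:ℝ) - (z0 i:ℝ))^2 := by positivity
        nlinarith [Real.sq_sqrt hnn, Real.sqrt_nonneg (∑ i, ((z i:ℝ) - (z0 i:ℝ))^2)]
      have hcoord : ∀ i, ((z i:ℝ) - (z0 i:ℝ)) = (p:ℝ) * ((φ z i : ℤ) : ℝ) := by
        intro i
        have hq := hzi z hzd i
        have : ((z i : ℤ):ℝ) = (((z0 i + p * φ z i) : ℤ):ℝ) := congrArg (fun a : ℤ => (a:ℝ)) hq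
        push_cast at this
        linarith
      have hsumw : ∑ i, (((φ z i : ℤ)):ℝ)^2 ≤ t := by
        have e : ∀ i, ((z i:ℝ) - (z0 i:ℝ))^2 = (p:ℝ)^2 * ((φ z i:ℤ):ℝ)^2 := by
          intro i; rw [hcoord i]; ring
        have h5 : (p:ℝ)^2 * ∑ i, ((φ z i:ℤ):ℝ)^2 ≤ 4*ρ^2 := by
          rw [Finset.mul_sum]
          calc ∑ i, (p:ℝ)^2 * ((φ z i:ℤ):ℝ)^2 = ∑ i, ((z i:ℝ)-(z0 i:ℝ))^2 :=
                Finset.sum_congr rfl (fun i _ => (e i).symm)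
            _ ≤ 4*ρ^2 := hsum2
        rw [htdef, le_div_iff₀ (by positivity : (0:ℝ) < (p:ℝ)^2)]
        nlinarith [h5]
      have habs : ∀ i, (((φ z i).natAbs : ℕ) : ℝ) ≤ (((φ z i : ℤ)):ℝ)^2 := by
        intro i
        have h7 : (((φ z i).natAbs : ℕ) : ℝ) ≤ (((φ z i).natAbs : ℕ) : ℝ)^2 := by
          have h9 : ((φ z i).natAbs : ℕ) ≤ ((φ z i).natAbs)^2 := Nat.le_self_pow two_ne_zero _
          exact_mod_cast h9
        have h8 : ((((φ z i).natAbs : ℕ)) : ℝ)^2 = (((φ z i : ℤ)):ℝ)^2 := by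
          rw [Nat.cast_natAbs]
          push_cast
          rw [sq_abs]
        rw [← h8]; exact h7
      have hsumabs : ((∑ i, (φ z i).natAbs : ℕ) : ℝ) ≤ t := by
        push_cast
        calc ∑ i, (((φ z i).natAbs : ℕ):ℝ) ≤ ∑ i, ((φ z i:ℤ):ℝ)^2 :=
              Finset.sum_le_sum (fun i _ => habs i)
          _ ≤ t := hsumw
      exact Nat.le_floor hsumabs
    calc (Set.ncard {z : Fin n → ℤ | Real.sqrt (∑ i, ((z i : ℝ) - c i) ^ 2) ≤ ρ ∧
            ∀ i, (p : ℤ) ∣ (z i - μ * x i)} : ℝ)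
        = ((φ '' {z : Fin n → ℤ | Real.sqrt (∑ i, ((z i : ℝ) - c i) ^ 2) ≤ ρ ∧
            ∀ i, (p : ℤ) ∣ (z i - μ * x i)}).ncard : ℝ) := by
          rw [Set.ncard_image_of_injOn hinj]
      _ ≤ ((Set.ncard {w : Fin n → ℤ | ∑ i, (w i).natAbs ≤ K}) : ℝ) := by
          have h6 := Set.ncard_le_ncard
            (s := φ '' {z : Fin n → ℤ | Real.sqrt (∑ i, ((z i : ℝ) - c i) ^ 2) ≤ ρ ∧
              ∀ i, (p : ℤ) ∣ (z i - μ * x i)})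
            (t := {w : Fin n → ℤ | ∑ i, (w i).natAbs ≤ K})
            (by rintro y ⟨z, hz, rfl⟩; exact hmem z hz.1 hz.2) (W_finite n K)
          exact_mod_cast h6
      _ ≤ (((2*n+1)^K : ℕ) : ℝ) := by exact_mod_cast W_card n K
      _ ≤ 1 + t * (2*(n:ℝ)*t) ^ (t:ℝ) := real_bound hn ht
      _ = 1 + t * (8 * (n:ℝ) * ρ ^ 2 / (p : ℝ) ^ 2) ^ (t:ℝ) := by rw [hbase]
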